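/- For all a, b ∈ (−1,1) with 0 ≤ |b| < |a| < 1, the denominator B(a,b) is strictly positive and the approximate crossover rate is strictly positive: J̃(a,b) > 0. -/

import Mathlib

/-- The approximate crossover rate J̃(a,b) = A(a,b)/B(a,b). -/
noncomputable def Jt (a b : ℝ) : ℝ :=
  ((1 / 2) * Real.log ((1 - b ^ 2) / (1 - a ^ 2))) ^ 2 /
    (2 * (b ^ 4 + b ^ 2) / (1 - b ^ 2) ^ 2 + 2 * (a ^ 4 + a ^ 2) / (1 - a ^ 2) ^ 2
      - 4 * b ^ 2 * (a ^ 2 + 1) / ((1 - b ^ 2) * (1 - a ^ 2)))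

/-- For 0 ≤ |b| < |a| < 1, the denominator B(a,b) is strictly positive and J̃(a,b) > 0. -/
theorem Jt_pos (a b : ℝ) (hba : |b| < |a|) (ha : |a| < 1) :
    0 < 2 * (b ^ 4 + b ^ 2) / (1 - b ^ 2) ^ 2 + 2 * (a ^ 4 + a ^ 2) / (1 - a ^ 2) ^ 2
        - 4 * b ^ 2 * (a ^ 2 + 1) / ((1 - b ^ 2) * (1 - a ^ 2)) ∧
    0 < Jt a b := by
  have hb : |b| < 1 := hba.trans ha
  have ha2 : a ^ 2 < 1 := by
    have := abs_lt.mp ha; nlinarith [abs_nonneg a, sq_abs a]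
  have hba2 : b ^ 2 < a ^ 2 := by
    have h1 := abs_nonneg b
    nlinarith [sq_abs a, sq_abs b, abs_nonneg a]
  have hb2 : b ^ 2 < 1 := hba2.trans ha2
  have hb0 : (0:ℝ) ≤ b ^ 2 := sq_nonneg b
  have hua : (0:ℝ) < 1 - a ^ 2 := by linarith
  have hub : (0:ℝ) < 1 - b ^ 2 := by linarith
  have hP : 0 < 2 * (b ^ 4 + b ^ 2) * (1 - a ^ 2) ^ 2 + 2 * (a ^ 4 + a ^ 2) * (1 - b ^ 2) ^ 2
      - 4 * b ^ 2 * (a ^ 2 + 1) * ((1 - b ^ 2) * (1 - a ^ 2)) := by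
    nlinarith [sq_nonneg (a^2 - b^2), sq_nonneg (a^2 + b^2), sq_nonneg (a*b), mul_pos hua hub,
      sq_nonneg (a^2*b^2 - 1), mul_pos (mul_pos hua hub) (sub_pos.mpr hba2),
      sq_nonneg (a^2 - b^2 - a^2*b^2)]
  have hB : 0 < 2 * (b ^ 4 + b ^ 2) / (1 - b ^ 2) ^ 2 + 2 * (a ^ 4 + a ^ 2) / (1 - a ^ 2) ^ 2
      - 4 * b ^ 2 * (a ^ 2 + 1) / ((1 - b ^ 2) * (1 - a ^ 2)) := by
    have heq : 2 * (b ^ 4 + b ^ 2) / (1 - b ^ 2) ^ 2 + 2 * (a ^ 4 + a ^ 2) / (1 - a ^ 2) ^ 2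
        - 4 * b ^ 2 * (a ^ 2 + 1) / ((1 - b ^ 2) * (1 - a ^ 2)) =
        (2 * (b ^ 4 + b ^ 2) * (1 - a ^ 2) ^ 2 + 2 * (a ^ 4 + a ^ 2) * (1 - b ^ 2) ^ 2
          - 4 * b ^ 2 * (a ^ 2 + 1) * ((1 - b ^ 2) * (1 - a ^ 2))) /
        ((1 - b ^ 2) ^ 2 * (1 - a ^ 2) ^ 2) := by
      field_simp
    rw [heq]
    positivity
  refine ⟨hB, ?_⟩
  have hlog : 0 < Real.log ((1 - b ^ 2) / (1 - a ^ 2)) := by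
    apply Real.log_pos
    rw [lt_div_iff₀ hua]
    linarith
  unfold Jt
  positivity
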